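/- Let G be an abelian profinite group and Q(G) the fraction ring of the Iwasawa algebra Λ(G). Suppose p is odd, G = ℤ_p^×, a is a topological generator of ℤ_p^×, and μ ∈ Λ(ℤ_p^×). Then μ' = μ/([a]-[1]) ∈ Q(ℤ_p^×) is a pseudo-measure: ([g]-[1])μ' ∈ Λ(ℤ_p^×) for all g ∈ ℤ_p^×. (Key step: the augmentation ideal I(ℤ_p^×) equals the principal ideal ([a]-[1])Λ(ℤ_p^×).) -/

import Mathlib

open scoped Classical

variable (p : ℕ) [Fact p.Prime]

/-- The group ring `ℤ_p[(ℤ/p^{n+1}ℤ)^×]` at level `n`. -/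
abbrev IwLevel (n : ℕ) : Type :=
  MonoidAlgebra ℤ_[p] (ZMod (p ^ (n + 1)))ˣ

/-- The transition map `ℤ_p[(ℤ/p^{n+2}ℤ)^×] → ℤ_p[(ℤ/p^{n+1}ℤ)^×]`. -/
noncomputable def iwTransition (n : ℕ) : IwLevel p (n + 1) →+* IwLevel p n :=
  MonoidAlgebra.mapDomainRingHom ℤ_[p]
    (Units.map (ZMod.castHom (pow_dvd_pow p (Nat.le_succ (n + 1)))
      (ZMod (p ^ (n + 1)))).toMonoidHom)

/-- The Iwasawa algebra `Λ(ℤ_p^×) = lim← ℤ_p[(ℤ/p^nℤ)^×]`, realized as the subring of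
compatible sequences in the product of the finite-level group rings. -/
noncomputable def IwasawaAlgebra : Subring ((n : ℕ) → IwLevel p n) where
  carrier := {x | ∀ n, iwTransition p n (x (n + 1)) = x n}
  zero_mem' := fun n => by simp
  one_mem' := fun n => by simp
  add_mem' := by
    intro a b ha hb n
    simp only [Pi.add_apply, map_add, ha n, hb n]
  mul_mem' := by
    intro a b ha hb n
    simp only [Pi.mul_apply, map_mul, ha n, hb n]
  neg_mem' := by
    intro a ha n
    simp only [Pi.neg_apply, map_neg, ha n]

/-- The group-like element `[a] ∈ Λ(ℤ_p^×)` attached to `a ∈ ℤ_p^×`. -/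
noncomputable def iwDelta (a : (ℤ_[p])ˣ) : IwasawaAlgebra p :=
  ⟨fun n => MonoidAlgebra.single
      (Units.map (PadicInt.toZModPow (n + 1)).toMonoidHom a) 1, by
    intro n
    have h : (ZMod.castHom (pow_dvd_pow p (Nat.le_succ (n + 1)))
          (ZMod (p ^ (n + 1)))).comp (PadicInt.toZModPow (n + 2)) =
        PadicInt.toZModPow (n + 1) :=
      PadicInt.zmod_cast_comp_toZModPow (n + 1) (n + 2) (Nat.le_succ _)
    have h2 : (ZMod.castHom (pow_dvd_pow p (Nat.le_succ (n + 1)))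
          (ZMod (p ^ (n + 1)))).toMonoidHom.comp
            (PadicInt.toZModPow (n + 2)).toMonoidHom =
        (PadicInt.toZModPow (n + 1)).toMonoidHom := by
      ext x
      exact DFunLike.congr_fun h x
    show MonoidAlgebra.mapDomain _ _ = _
    rw [MonoidAlgebra.mapDomain_single, ← MonoidHom.comp_apply, ← Units.map_comp, h2]⟩

/-- The degree (augmentation) map `Λ(ℤ_p^×) → ℤ_p`, `Σ c_a [a] ↦ Σ c_a`. -/
noncomputable def iwDegree : IwasawaAlgebra p →+* ℤ_[p] :=
  (((MonoidAlgebra.lift ℤ_[p] ℤ_[p] (ZMod (p ^ (0 + 1)))ˣ) 1).toRingHom).comp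
    ((Pi.evalRingHom (IwLevel p) 0).comp (IwasawaAlgebra p).subtype)


open MonoidAlgebra Finset

section GroupRing

variable {R : Type*} [CommRing R] {G : Type*} [CommGroup G]

/-- `[g^k] - 1` is divisible by `[g] - 1`. -/
lemma geom_div (g : G) (k : ℕ) :
    ∃ y : MonoidAlgebra R G, (single g 1 - 1) * y = single (g ^ k) 1 - 1 := by
  induction k with
  | zero => exact ⟨0, by simp [MonoidAlgebra.one_def]⟩
  | succ k ih =>
    obtain ⟨y, hy⟩ := ih
    refine ⟨single g 1 * y + 1, ?_⟩
    rw [mul_add, mul_one, mul_left_comm, hy, mul_sub, mul_one, single_mul_single, mul_one,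
      ← pow_succ']
    ring

variable [Fintype G]

/-- The norm element `N = ∑ [h]`. -/
noncomputable def normElt (R : Type*) [CommRing R] (G : Type*) [CommGroup G] [Fintype G] :
    MonoidAlgebra R G := ∑ h : G, single h 1

lemma normElt_apply (y : G) : (normElt R G).coeff y = 1 := by
  classical
  rw [normElt, coeff_sum, Finsupp.finset_sum_apply]
  simp only [coeff_single]
  rw [Finset.sum_eq_single y (fun b _ hb => Finsupp.single_eq_of_ne' hb) (by simp)]
  simp

lemma single_mul_normElt (g : G) : single g (1 : R) * normElt R G = normElt R G := by
  classical
  rw [normElt, Finset.mul_sum]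
  refine Fintype.sum_equiv (Equiv.mulLeft g) _ _ fun h => ?_
  rw [single_mul_single, one_mul]
  rfl

lemma sub_one_mul_normElt (g : G) :
    (single g (1 : R) - 1) * normElt R G = 0 := by
  rw [sub_mul, one_mul, single_mul_normElt, sub_self]

/-- If `g` generates `G` and `([g]-1) z = 0` then `z = z(1) • N`. -/
lemma ann_eq_smul_norm (g : G) (hg : ∀ h : G, ∃ k : ℕ, g ^ k = h)
    (z : MonoidAlgebra R G) (hz : (single g 1 - 1) * z = 0) :
    z = z.coeff 1 • normElt R G := by
  have hstep : ∀ y : G, z.coeff (g⁻¹ * y) = z.coeff y := by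
    intro y
    rw [sub_mul, one_mul, sub_eq_zero] at hz
    have h2 := congrArg (fun w : MonoidAlgebra R G => w.coeff y) hz
    simpa [coeff_single_mul_apply] using h2
  have hpow : ∀ k : ℕ, z.coeff (g ^ k) = z.coeff 1 := by
    intro k
    induction k with
    | zero => simp
    | succ k ih =>
      rw [← ih, ← hstep (g ^ (k + 1))]
      congr 1
      rw [pow_succ]
      group
  ext y
  obtain ⟨k, rfl⟩ := hg y
  rw [coeff_smul, Finsupp.smul_apply, normElt_apply, smul_eq_mul, mul_one, hpow, ← pow_zero g, hpow]

/-- If `g` generates `G`, any element of augmentation zero is divisible by `[g]-1`. -/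
lemma aug_zero_div (g : G) (hg : ∀ h : G, ∃ k : ℕ, g ^ k = h)
    (x : MonoidAlgebra R G) (hx : (MonoidAlgebra.lift R R G) 1 x = 0) :
    ∃ y : MonoidAlgebra R G, (single g 1 - 1) * y = x := by
  have key : ∀ x : MonoidAlgebra R G,
      ∃ y, (single g 1 - 1) * y = x - ((MonoidAlgebra.lift R R G) 1 x) • 1 := by
    intro x
    induction x using MonoidAlgebra.induction_on with
    | of h =>
      obtain ⟨k, rfl⟩ := hg h
      obtain ⟨y, hy⟩ := geom_div (R := R) g k
      exact ⟨y, by simpa [MonoidAlgebra.of_apply, MonoidAlgebra.lift_single] using hy⟩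
    | add f₁ f₂ h₁ h₂ =>
      obtain ⟨y₁, hy₁⟩ := h₁
      obtain ⟨y₂, hy₂⟩ := h₂
      exact ⟨y₁ + y₂, by rw [mul_add, hy₁, hy₂, map_add]; module⟩
    | smul r f hf =>
      obtain ⟨y, hy⟩ := hf
      refine ⟨r • y, ?_⟩
      rw [mul_smul_comm, hy, map_smul, smul_eq_mul]
      module
  obtain ⟨y, hy⟩ := key x
  rw [hx] at hy
  exact ⟨y, by simpa using hy⟩

end GroupRing

section Fiber

open Finset

lemma fiber_card_mul {G₁ G₂ : Type*} [CommGroup G₁] [CommGroup G₂] [Fintype G₁] [Fintype G₂]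
    [DecidableEq G₂] (f : G₁ →* G₂) (hf : Function.Surjective f) (b : G₂) :
    (Finset.univ.filter (fun a => f a = b)).card * Fintype.card G₂ = Fintype.card G₁ := by
  have hcong : ∀ b₁ b₂ : G₂,
      (Finset.univ.filter (fun a => f a = b₁)).card =
        (Finset.univ.filter (fun a => f a = b₂)).card := by
    intro b₁ b₂
    obtain ⟨v₁, hv₁⟩ := hf b₁
    obtain ⟨v₂, hv₂⟩ := hf b₂
    refine Finset.card_bij' (fun a _ => a * (v₂ * v₁⁻¹)) (fun a _ => a * (v₁ * v₂⁻¹)) ?_ ?_ ?_ ?_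
    · intro a ha
      simp only [mem_filter, mem_univ, true_and] at ha ⊢
      simp [ha, hv₁, hv₂, mul_assoc]
    · intro a ha
      simp only [mem_filter, mem_univ, true_and] at ha ⊢
      simp [ha, hv₁, hv₂, mul_assoc]
    · intro a _; group
    · intro a _; group
  have htotal : Fintype.card G₁ =
      ∑ b' : G₂, (Finset.univ.filter (fun a => f a = b')).card := by
    rw [← Finset.card_univ]
    exact Finset.card_eq_sum_card_fiberwise (fun x _ => Finset.mem_univ _)
  rw [htotal, Finset.sum_congr rfl (fun b' _ => hcong b' b), Finset.sum_const, Finset.card_univ,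
    smul_eq_mul, mul_comm]

end Fiber

section Eps

variable {p : ℕ} [Fact p.Prime]

lemma eps_summable (δ : ℕ → ℤ_[p]) (n : ℕ) :
    Summable (fun i : ℕ => δ (n + i) * (p : ℤ_[p]) ^ i) := by
  have hp1 : (1 : ℝ) < p := Nat.one_lt_cast.mpr (Fact.out : p.Prime).one_lt
  have hgeom : Summable (fun i : ℕ => ((p : ℝ)⁻¹) ^ i) :=
    summable_geometric_of_lt_one (by positivity) (inv_lt_one_of_one_lt₀ hp1)
  refine Summable.of_norm (Summable.of_nonneg_of_le (fun i => norm_nonneg _) (fun i => ?_) hgeom)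
  rw [norm_mul, norm_pow, PadicInt.norm_p]
  exact mul_le_of_le_one_left (by positivity) (PadicInt.norm_le_one _)

lemma eps_rec (δ : ℕ → ℤ_[p]) (n : ℕ) :
    (∑' i : ℕ, δ (n + i) * (p : ℤ_[p]) ^ i) =
      δ n + p * ∑' i : ℕ, δ (n + 1 + i) * (p : ℤ_[p]) ^ i := by
  rw [Summable.tsum_eq_zero_add (eps_summable δ n)]
  simp only [pow_zero, mul_one, add_zero]
  congr 1
  rw [← Summable.tsum_mul_left (p : ℤ_[p]) (eps_summable δ (n + 1))]
  congr 1
  funext i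
  have : n + (i + 1) = n + 1 + i := by omega
  rw [this, pow_succ]
  ring

lemma padic_zero_of_rec (c : ℕ → ℤ_[p]) (hc : ∀ n, c n = p * c (n + 1)) (n : ℕ) :
    c n = 0 := by
  have hp1 : (1 : ℝ) < p := Nat.one_lt_cast.mpr (Fact.out : p.Prime).one_lt
  have key : ∀ k, c n = (p : ℤ_[p]) ^ k * c (n + k) := by
    intro k
    induction k with
    | zero => simp
    | succ k ih => rw [ih, hc (n + k), ← mul_assoc, ← pow_succ]; ring_nf
  have hnorm : ∀ k : ℕ, ‖c n‖ ≤ ((p : ℝ)⁻¹) ^ k := by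
    intro k
    rw [key k, norm_mul, norm_pow, PadicInt.norm_p]
    exact mul_le_of_le_one_right (by positivity) (PadicInt.norm_le_one _)
  have hlim : Filter.Tendsto (fun k : ℕ => ((p : ℝ)⁻¹) ^ k) Filter.atTop (nhds 0) :=
    tendsto_pow_atTop_nhds_zero_of_lt_one (by positivity) (inv_lt_one_of_one_lt₀ hp1)
  have : ‖c n‖ ≤ 0 := ge_of_tendsto hlim (Filter.Eventually.of_forall hnorm)
  simpa using le_antisymm this (norm_nonneg _)

end Eps

section Levels

variable (p : ℕ) [Fact p.Prime]

instance iw_nezero (n : ℕ) : NeZero (p ^ n) :=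
  ⟨pow_ne_zero _ (Fact.out : p.Prime).ne_zero⟩

/-- The image of `a : ℤ_pˣ` at level `n`. -/
noncomputable def aLevel (a : (ℤ_[p])ˣ) (n : ℕ) : (ZMod (p ^ (n + 1)))ˣ :=
  Units.map (PadicInt.toZModPow (n + 1)).toMonoidHom a

lemma iwDelta_val (a : (ℤ_[p])ˣ) (n : ℕ) :
    (iwDelta p a).val n = MonoidAlgebra.single (aLevel p a n) 1 := rfl

lemma mem_iwasawa_iff (x : (n : ℕ) → IwLevel p n) :
    x ∈ IwasawaAlgebra p ↔ ∀ n, iwTransition p n (x (n + 1)) = x n := Iff.rfl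

/-- The transition group homomorphism at the level of units. -/
noncomputable abbrev levelHom (n : ℕ) : (ZMod (p ^ (n + 2)))ˣ →* (ZMod (p ^ (n + 1)))ˣ :=
  Units.map (ZMod.castHom (pow_dvd_pow p (Nat.le_succ (n + 1)))
    (ZMod (p ^ (n + 1)))).toMonoidHom

lemma iwTransition_single (n : ℕ) (h : (ZMod (p ^ (n + 2)))ˣ) (c : ℤ_[p]) :
    iwTransition p n (MonoidAlgebra.single h c) =
      MonoidAlgebra.single (levelHom p n h) c := by
  show MonoidAlgebra.mapDomain _ _ = _
  rw [MonoidAlgebra.mapDomain_single]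

lemma levelHom_surjective (n : ℕ) : Function.Surjective (levelHom p n) :=
  ZMod.unitsMap_surjective (pow_dvd_pow p (Nat.le_succ (n + 1)))

/-- The norm element at level `n`. -/
noncomputable def levelNorm (n : ℕ) : IwLevel p n := normElt ℤ_[p] (ZMod (p ^ (n + 1)))ˣ

lemma fiber_card_eq (n : ℕ) (b : (ZMod (p ^ (n + 1)))ˣ) :
    (Finset.univ.filter (fun a => levelHom p n a = b)).card = p := by
  have h := fiber_card_mul (levelHom p n) (levelHom_surjective p n) b
  rw [ZMod.card_units_eq_totient, ZMod.card_units_eq_totient,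
    Nat.totient_prime_pow (Fact.out : p.Prime) (Nat.succ_pos n),
    Nat.totient_prime_pow (Fact.out : p.Prime) (Nat.succ_pos (n + 1))] at h
  simp only [Nat.succ_sub_one] at h
  have hpos : 0 < p ^ n * (p - 1) :=
    Nat.mul_pos (pow_pos (Fact.out : p.Prime).pos n) (by
      have := (Fact.out : p.Prime).two_le; omega)
  have h2 : (Finset.univ.filter (fun a => levelHom p n a = b)).card * (p ^ n * (p - 1)) =
      p * (p ^ n * (p - 1)) := by rw [h]; ring
  exact Nat.eq_of_mul_eq_mul_right hpos h2

end Levels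

section Levels2

open MonoidAlgebra

variable (p : ℕ) [Fact p.Prime]

lemma iwTransition_smul (n : ℕ) (c : ℤ_[p]) (x : IwLevel p (n + 1)) :
    iwTransition p n (c • x) = c • iwTransition p n x := by
  show MonoidAlgebra.mapDomain _ (c • x) = c • MonoidAlgebra.mapDomain _ x
  exact MonoidAlgebra.mapDomain_smul _ c x

lemma iwTransition_levelNorm (n : ℕ) :
    iwTransition p n (levelNorm p (n + 1)) = (p : ℤ_[p]) • levelNorm p n := by
  classical
  rw [levelNorm, normElt, map_sum]
  simp only [iwTransition_single]
  rw [← Finset.sum_fiberwise_of_maps_to (g := levelHom p n)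
    (fun x _ => Finset.mem_univ (levelHom p n x))
    (fun a => MonoidAlgebra.single (levelHom p n a) (1 : ℤ_[p]))]
  rw [levelNorm, normElt, Finset.smul_sum]
  refine Finset.sum_congr rfl fun b _ => ?_
  have hinner : ∑ a ∈ Finset.univ.filter (fun a => levelHom p n a = b),
      MonoidAlgebra.single (levelHom p n a) (1 : ℤ_[p]) =
      ∑ _a ∈ Finset.univ.filter (fun a => levelHom p n a = b),
        MonoidAlgebra.single b (1 : ℤ_[p]) :=
    Finset.sum_congr rfl (fun a ha => by rw [(Finset.mem_filter.mp ha).2])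
  rw [hinner, Finset.sum_const, fiber_card_eq, ← Nat.cast_smul_eq_nsmul ℤ_[p]]

/-- The augmentation at level `n`. -/
noncomputable def degLevel (n : ℕ) : IwLevel p n →+* ℤ_[p] :=
  ((MonoidAlgebra.lift ℤ_[p] ℤ_[p] (ZMod (p ^ (n + 1)))ˣ) 1).toRingHom

lemma degLevel_single (n : ℕ) (h : (ZMod (p ^ (n + 1)))ˣ) (c : ℤ_[p]) :
    degLevel p n (MonoidAlgebra.single h c) = c := by
  show (MonoidAlgebra.lift ℤ_[p] ℤ_[p] (ZMod (p ^ (n + 1)))ˣ) 1 (MonoidAlgebra.single h c) = c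
  rw [MonoidAlgebra.lift_single]
  simp

lemma degLevel_transition (n : ℕ) (x : IwLevel p (n + 1)) :
    degLevel p n (iwTransition p n x) = degLevel p (n + 1) x := by
  have h : (degLevel p n).comp (iwTransition p n) = degLevel p (n + 1) := by
    refine MonoidAlgebra.ringHom_ext (fun b => ?_) (fun h => ?_) <;>
      rw [RingHom.comp_apply, iwTransition_single, degLevel_single, degLevel_single]
  exact DFunLike.congr_fun h x

lemma iwDegree_eq (μ : IwasawaAlgebra p) : iwDegree p μ = degLevel p 0 (μ.val 0) := rfl

lemma degLevel_all_zero (μ : IwasawaAlgebra p) (h : iwDegree p μ = 0) (n : ℕ) :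
    degLevel p n (μ.val n) = 0 := by
  induction n with
  | zero => exact h
  | succ n ih => rw [← degLevel_transition, μ.2 n]; exact ih

lemma iwDegree_delta (g : (ℤ_[p])ˣ) : iwDegree p (iwDelta p g) = 1 := by
  rw [iwDegree_eq, iwDelta_val, degLevel_single]

end Levels2

section Construction

open MonoidAlgebra

variable (p : ℕ) [Fact p.Prime]

lemma exists_div (a : (ℤ_[p])ˣ)
    (hgen : ∀ n (h : (ZMod (p ^ (n + 1)))ˣ), ∃ k : ℕ, (aLevel p a n) ^ k = h)
    (μ : IwasawaAlgebra p) (h0 : ∀ n, degLevel p n (μ.val n) = 0) :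
    ∃ y : IwasawaAlgebra p, (iwDelta p a - 1) * y = μ := by
  classical
  have hta : ∀ n, iwTransition p n (single (aLevel p a (n + 1)) (1 : ℤ_[p])) =
      single (aLevel p a n) 1 := fun n => (iwDelta p a).2 n
  choose Y hY using fun n =>
    aug_zero_div (aLevel p a n) (hgen n) (μ.val n) (h0 n)
  set D : ∀ n, IwLevel p n := fun n => single (aLevel p a n) 1 - 1 with hD
  have hzero : ∀ n, D n * (iwTransition p n (Y (n + 1)) - Y n) = 0 := by
    intro n
    have hDt : iwTransition p n (D (n + 1)) = D n := by
      rw [hD]; simp only [map_sub, map_one, hta n]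
    rw [mul_sub, ← hDt, ← map_mul, hY (n + 1), μ.2 n, hDt, hY n, sub_self]
  set δ : ℕ → ℤ_[p] := fun n => (iwTransition p n (Y (n + 1)) - Y n).coeff 1 with hδdef
  have hδ : ∀ n, iwTransition p n (Y (n + 1)) - Y n = δ n • levelNorm p n := fun n =>
    ann_eq_smul_norm (aLevel p a n) (hgen n) _ (hzero n)
  set ε : ℕ → ℤ_[p] := fun n => ∑' i, δ (n + i) * (p : ℤ_[p]) ^ i with hεdef
  have hε : ∀ n, ε n = δ n + p * ε (n + 1) := fun n => eps_rec δ n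
  set y : ∀ n, IwLevel p n := fun n => Y n + ε n • levelNorm p n with hy
  have hymem : y ∈ IwasawaAlgebra p := by
    intro n
    have h1 : iwTransition p n (Y (n + 1)) = Y n + δ n • levelNorm p n := by
      rw [← hδ n]; ring
    show iwTransition p n (Y (n + 1) + ε (n + 1) • levelNorm p (n + 1)) =
      Y n + ε n • levelNorm p n
    rw [map_add, iwTransition_smul, iwTransition_levelNorm, h1, hε n, smul_smul]
    module
  refine ⟨⟨y, hymem⟩, ?_⟩
  apply Subtype.ext; funext n
  show D n * y n = μ.val n
  rw [hy]
  show D n * (Y n + ε n • levelNorm p n) = μ.val n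
  have hDN : D n * levelNorm p n = 0 := sub_one_mul_normElt (aLevel p a n)
  rw [mul_add, hY n, mul_smul_comm, hDN, smul_zero, add_zero]

lemma delta_sub_one_nzd (a : (ℤ_[p])ˣ)
    (hgen : ∀ n (h : (ZMod (p ^ (n + 1)))ˣ), ∃ k : ℕ, (aLevel p a n) ^ k = h) :
    (iwDelta p a - 1) ∈ nonZeroDivisors (IwasawaAlgebra p) := by
  rw [mem_nonZeroDivisors_iff_right]
  intro z hz
  have hlev : ∀ n, (single (aLevel p a n) 1 - 1) * z.val n = 0 := by
    intro n
    have h := congrArg (fun w : IwasawaAlgebra p => w.val n) hz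
    have h2 : z.val n * (single (aLevel p a n) 1 - 1) = 0 := h
    rw [mul_comm] at h2
    exact h2
  set c : ℕ → ℤ_[p] := fun n => (z.val n).coeff 1 with hcdef
  have hcN : ∀ n, z.val n = c n • levelNorm p n := fun n =>
    ann_eq_smul_norm _ (hgen n) _ (hlev n)
  have hrec : ∀ n, c n = p * c (n + 1) := by
    intro n
    have h := z.2 n
    rw [hcN (n + 1), hcN n, iwTransition_smul, iwTransition_levelNorm] at h
    have h1 : c (n + 1) * ((p : ℤ_[p]) * (levelNorm p n).coeff 1) = c n * (levelNorm p n).coeff 1 :=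
      congrArg (fun w : IwLevel p n => w.coeff 1) h
    have hN1 : (levelNorm p n).coeff 1 = 1 := normElt_apply 1
    rw [hN1, mul_one, mul_one] at h1
    rw [← h1]; ring
  have hc0 := padic_zero_of_rec c hrec
  apply Subtype.ext; funext n
  show z.val n = 0
  rw [hcN n, hc0 n, zero_smul]

set_option synthInstance.maxHeartbeats 1000000 in
set_option maxHeartbeats 1000000 in
lemma ker_eq_span (a : (ℤ_[p])ˣ)
    (hgen : ∀ n (h : (ZMod (p ^ (n + 1)))ˣ), ∃ k : ℕ, (aLevel p a n) ^ k = h) :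
    RingHom.ker (iwDegree p) = Ideal.span {iwDelta p a - 1} := by
  apply le_antisymm
  · intro μ hμ
    rw [RingHom.mem_ker] at hμ
    obtain ⟨y, hy⟩ := exists_div p a hgen μ (degLevel_all_zero p μ hμ)
    rw [Ideal.mem_span_singleton]
    exact ⟨y, hy.symm⟩
  · rw [Ideal.span_le, Set.singleton_subset_iff, SetLike.mem_coe, RingHom.mem_ker,
      map_sub, map_one, iwDegree_delta, sub_self]

end Construction

section Topol

variable (p : ℕ) [Fact p.Prime]

lemma toZModPow_units_surjective (n : ℕ) :
    Function.Surjective (Units.map (PadicInt.toZModPow (p := p) (n + 1)).toMonoidHom) := by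
  intro u
  haveI : Fact (1 < p ^ (n + 1)) :=
    ⟨Nat.one_lt_pow (Nat.succ_ne_zero n) (Fact.out : p.Prime).one_lt⟩
  set m : ℕ := ZMod.val (u : ZMod (p ^ (n + 1))) with hmdef
  have hm : ((m : ZMod (p ^ (n + 1)))) = (u : ZMod (p ^ (n + 1))) :=
    ZMod.natCast_rightInverse _
  have hunit : IsUnit ((m : ℤ_[p])) := by
    rw [PadicInt.isUnit_iff]
    by_contra hne
    have hlt : ‖(m : ℤ_[p])‖ < 1 := lt_of_le_of_ne (PadicInt.norm_le_one _) hne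
    rw [PadicInt.norm_lt_one_iff_dvd] at hlt
    obtain ⟨t, ht⟩ := hlt
    have heq : (u : ZMod (p ^ (n + 1))) =
        (p : ZMod (p ^ (n + 1))) * (PadicInt.toZModPow (n + 1) t) := by
      rw [← hm, ← map_natCast (PadicInt.toZModPow (p := p) (n + 1)) m, ht, map_mul,
        map_natCast]
    have hpu : IsUnit ((p : ZMod (p ^ (n + 1)))) := by
      have := u.isUnit
      rw [heq] at this
      exact isUnit_of_mul_isUnit_left this
    have h0 : ((p : ZMod (p ^ (n + 1)))) ^ (n + 1) = 0 := by
      rw [← Nat.cast_pow, ZMod.natCast_self]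
    have := hpu.pow (n + 1)
    rw [h0] at this
    exact not_isUnit_zero this
  refine ⟨hunit.unit, ?_⟩
  apply Units.ext
  rw [Units.coe_map]
  show PadicInt.toZModPow (n + 1) (hunit.unit : ℤ_[p]) = _
  rw [IsUnit.unit_spec, map_natCast, hm]

lemma aLevel_generates (a : (ℤ_[p])ˣ)
    (ha : (Subgroup.zpowers a).topologicalClosure = ⊤) (n : ℕ)
    (h : (ZMod (p ^ (n + 1)))ˣ) : ∃ k : ℕ, (aLevel p a n) ^ k = h := by
  obtain ⟨v, hv⟩ := toZModPow_units_surjective p n h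
  have hdense : Dense (Subgroup.zpowers a : Set (ℤ_[p])ˣ) := by
    rw [dense_iff_closure_eq, ← Subgroup.topologicalClosure_coe, ha, Subgroup.coe_top]
  have hp0 : (0 : ℝ) < (p : ℝ) := by
    have := (Fact.out : p.Prime).pos; positivity
  set r : ℝ := (p : ℝ) ^ (-(n : ℤ)) with hrdef
  have hrpos : 0 < r := zpow_pos hp0 _
  set U : Set (ℤ_[p])ˣ := Units.val ⁻¹' Metric.ball ((v : ℤ_[p])) r with hU
  have hUopen : IsOpen U := Metric.isOpen_ball.preimage Units.continuous_val
  have hvU : v ∈ U := by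
    show (v : ℤ_[p]) ∈ Metric.ball _ _
    exact Metric.mem_ball_self hrpos
  obtain ⟨w, hwU, hwz⟩ := hdense.inter_open_nonempty U hUopen ⟨v, hvU⟩
  obtain ⟨k, hk⟩ := hwz
  have hnorm : ‖(w : ℤ_[p]) - (v : ℤ_[p])‖ < r := by
    have := hwU
    rw [hU, Set.mem_preimage, Metric.mem_ball, dist_eq_norm] at this
    exact this
  have hmem : ((w : ℤ_[p]) - (v : ℤ_[p])) ∈ Ideal.span {(p : ℤ_[p]) ^ (n + 1)} := by
    rw [← PadicInt.norm_le_pow_iff_mem_span_pow,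
      PadicInt.norm_le_pow_iff_norm_lt_pow_add_one]
    have he : (-(((n : ℕ) + 1 : ℕ)) : ℤ) + 1 = -(n : ℤ) := by push_cast; ring
    rw [he]
    exact hnorm
  have hker : PadicInt.toZModPow (n + 1) ((w : ℤ_[p]) - (v : ℤ_[p])) = 0 := by
    have := PadicInt.ker_toZModPow (p := p) (n + 1)
    rw [← RingHom.mem_ker, this]
    exact hmem
  have hπ : Units.map (PadicInt.toZModPow (p := p) (n + 1)).toMonoidHom w = h := by
    rw [← hv]
    apply Units.ext
    rw [Units.coe_map, Units.coe_map]
    rw [map_sub, sub_eq_zero] at hker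
    exact hker
  have hzp : h ∈ Subgroup.zpowers (aLevel p a n) :=
    ⟨k, by rw [← hπ, ← hk, map_zpow]; rfl⟩
  rw [← mem_powers_iff_mem_zpowers] at hzp
  exact (Submonoid.mem_powers_iff _ _).mp hzp

end Topol

set_option synthInstance.maxHeartbeats 1000000 in
set_option maxHeartbeats 1600000 in
/-- **Construction of pseudo-measures.**
Let `p` be odd, `a` a topological generator of `ℤ_p^×`, and `μ ∈ Λ(ℤ_p^×)`.  Then the
augmentation ideal `I(ℤ_p^×)` (the kernel of the degree map) is the principal ideal
generated by `[a] - [1]`, and `μ' = μ/([a]-[1])`, as an element of the total ring of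
fractions `Q(ℤ_p^×)`, is a pseudo-measure: `([g]-[1])·μ' ∈ Λ(ℤ_p^×)` for every
`g ∈ ℤ_p^×`. -/
theorem pseudo_measure_construction (hodd : Odd p) (a : (ℤ_[p])ˣ)
    (ha : (Subgroup.zpowers a).topologicalClosure = ⊤)
    (μ : IwasawaAlgebra p) :
    RingHom.ker (iwDegree p) = Ideal.span {iwDelta p a - 1} ∧
    ∃ μ' : FractionRing (IwasawaAlgebra p),
      μ' * algebraMap (IwasawaAlgebra p) (FractionRing (IwasawaAlgebra p))
          (iwDelta p a - 1) =
        algebraMap (IwasawaAlgebra p) (FractionRing (IwasawaAlgebra p)) μ ∧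
      ∀ g : (ℤ_[p])ˣ, ∃ ν : IwasawaAlgebra p,
        algebraMap (IwasawaAlgebra p) (FractionRing (IwasawaAlgebra p)) ν =
          algebraMap (IwasawaAlgebra p) (FractionRing (IwasawaAlgebra p))
            (iwDelta p g - 1) * μ' := by
  have hgen : ∀ n (h : (ZMod (p ^ (n + 1)))ˣ), ∃ k : ℕ, (aLevel p a n) ^ k = h :=
    fun n h => aLevel_generates p a ha n h
  have hker := ker_eq_span p a hgen
  refine ⟨hker, ?_⟩
  have hnzd := delta_sub_one_nzd p a hgen
  set K := FractionRing (IwasawaAlgebra p) with hK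
  set φ := algebraMap (IwasawaAlgebra p) K with hφ
  have hunit : IsUnit (φ (iwDelta p a - 1)) :=
    IsLocalization.map_units K (⟨_, hnzd⟩ : nonZeroDivisors (IwasawaAlgebra p))
  obtain ⟨u, hu⟩ := hunit
  refine ⟨φ μ * ↑u⁻¹, ?_, ?_⟩
  · rw [← hu, mul_assoc, Units.inv_mul, mul_one]
  · intro g
    have hg : iwDelta p g - 1 ∈ Ideal.span {iwDelta p a - 1} := by
      rw [← hker, RingHom.mem_ker, map_sub, map_one, iwDegree_delta, sub_self]
    rw [Ideal.mem_span_singleton] at hg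
    obtain ⟨c, hc⟩ := hg
    refine ⟨c * μ, ?_⟩
    rw [map_mul, hc, map_mul, ← hu]
    calc φ c * φ μ = (↑u * ↑u⁻¹) * (φ c * φ μ) := by rw [Units.mul_inv, one_mul]
    _ = ↑u * φ c * (φ μ * ↑u⁻¹) := by ring
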